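/- Let t₀ ∈ ℝ and (tᵢ)_{i≥1} be an impulse time sequence. Let M > 0, λ ∈ ℝ, L ≥ 0 and let (L_j)_{j≥1} be positive reals. Let u: [t₀,∞) → [0,∞) be impulsive-regular (in particular continuous on each interval [tᵢ, t_{i+1})) and suppose that for every i ≥ 0 and every t ∈ [tᵢ, t_{i+1}): u(t) ≤ M e^{λ(t − tᵢ)} u(tᵢ) + ∫_{tᵢ}^t M e^{λ(t − s)} L u(s) ds, and that u(t_{i+1}) ≤ L_{i+1} u(t_{i+1}⁻) for every i ≥ 0. Then for every n ≥ 0 and every t ∈ [t_n, t_{n+1}): u(t) ≤ M ( ∏_{j=1}^{n} L_j M ) u(t₀) e^{(M L + λ)(t − t₀)}, where the empty product equals 1. -/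

import Mathlib

open Filter Topology Set MeasureTheory intervalIntegral

noncomputable section

/-- Class 𝒦: continuous, strictly increasing on `[0,∞)`, vanishing at `0`. -/
def ClassK (γ : ℝ → ℝ) : Prop :=
  ContinuousOn γ (Set.Ici 0) ∧ StrictMonoOn γ (Set.Ici 0) ∧ γ 0 = 0

/-- Class 𝒦∞: class 𝒦 and unbounded. -/
def ClassKInf (γ : ℝ → ℝ) : Prop :=
  ClassK γ ∧ Filter.Tendsto γ Filter.atTop Filter.atTop

/-- Class 𝒦ℒ. -/
def ClassKL (β : ℝ → ℝ → ℝ) : Prop :=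
  (∀ s, 0 ≤ s → ClassK (fun r => β r s)) ∧
  (∀ r, 0 ≤ r → AntitoneOn (fun s => β r s) (Set.Ici 0) ∧
    Filter.Tendsto (fun s => β r s) Filter.atTop (nhds 0))

/-- Class 𝒫: continuous, positive definite. -/
def ClassP (φ : ℝ → ℝ) : Prop :=
  ContinuousOn φ (Set.Ici 0) ∧ φ 0 = 0 ∧ ∀ r, 0 < r → 0 < φ r

/-- Upper right Dini derivative `D⁺v(t) = limsup_{s→0⁺} (v(t+s) − v(t))/s`, valued in `EReal`. -/
def DiniUpper (v : ℝ → ℝ) (t : ℝ) : EReal :=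
  Filter.limsup (fun s => (((v (t + s) - v t) / s : ℝ) : EReal)) (nhdsWithin 0 (Set.Ioi 0))

/-- Impulse time sequence with initial time `t₀ = τ 0`: strictly increasing and tending to `∞`;
the impulse times are `τ i` for `i ≥ 1`. -/
def IsImpulseSeq (t₀ : ℝ) (τ : ℕ → ℝ) : Prop :=
  τ 0 = t₀ ∧ StrictMono τ ∧ Filter.Tendsto τ Filter.atTop Filter.atTop

/-- The set `S = {tᵢ : i ≥ 1}` of impulse times. -/
def impulseSet (τ : ℕ → ℝ) : Set ℝ := {s | ∃ i : ℕ, 1 ≤ i ∧ τ i = s}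

/-- Impulsive-regular function on `[t₀,∞)`: right-continuous everywhere, continuous (within
`[t₀,∞)`) at every non-impulse time, and left limits exist at every impulse time. -/
def ImpulsiveRegular (t₀ : ℝ) (τ : ℕ → ℝ) (v : ℝ → ℝ) : Prop :=
  (∀ t, t₀ ≤ t → ContinuousWithinAt v (Set.Ici t) t) ∧
  (∀ t, t₀ ≤ t → t ∉ impulseSet τ → ContinuousWithinAt v (Set.Ici t₀) t) ∧
  (∀ i : ℕ, 1 ≤ i → ∃ L : ℝ, Filter.Tendsto v (nhdsWithin (τ i) (Set.Iio (τ i))) (nhds L))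

/-- Integral form of Gronwall's inequality for continuous nonnegative functions. -/
theorem integral_gronwall {a b A C : ℝ} {v : ℝ → ℝ} (hab : a ≤ b)
    (hv : ContinuousOn v (Icc a b)) (hvnn : ∀ t ∈ Icc a b, 0 ≤ v t)
    (hC : 0 ≤ C) (hA : 0 ≤ A)
    (hle : ∀ t ∈ Icc a b, v t ≤ A + ∫ s in a..t, C * v s) :
    ∀ t ∈ Icc a b, v t ≤ A * Real.exp (C * (t - a)) := by
  set g : ℝ → ℝ := fun s => C * v s with hg
  have hgc : ContinuousOn g (Icc a b) := continuousOn_const.mul hv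
  have hgint : IntegrableOn g (Icc a b) := hgc.integrableOn_Icc
  set W : ℝ → ℝ := fun t => A + ∫ s in a..t, g s with hW
  have hWc : ContinuousOn W (Icc a b) := by
    apply continuousOn_const.add
    have := intervalIntegral.continuousOn_primitive_interval (f := g) (μ := volume) (a := a) (b := b)
      (by rwa [uIcc_of_le hab])
    rwa [uIcc_of_le hab] at this
  have hIccmem : ∀ x ∈ Ico a b, Icc a b ∈ 𝓝[Ioi x] x := by
    intro x hx
    apply mem_nhdsWithin.2 ⟨Iio b, isOpen_Iio, hx.2, ?_⟩
    rintro y ⟨hy1, hy2⟩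
    exact ⟨hx.1.trans (le_of_lt hy2), le_of_lt hy1⟩
  have hW' : ∀ x ∈ Ico a b, HasDerivWithinAt W (g x) (Ici x) x := by
    intro x hx
    apply HasDerivWithinAt.const_add
    apply intervalIntegral.integral_hasDerivWithinAt_right
      (t := Ioi x)
      ((hgc.mono (Icc_subset_Icc le_rfl hx.2.le)).intervalIntegrable_of_Icc hx.1)
      ⟨Icc a b, hIccmem x hx, hgc.aestronglyMeasurable measurableSet_Icc⟩
    exact (hgc x ⟨hx.1, hx.2.le⟩).mono_of_mem_nhdsWithin (hIccmem x hx)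
  have hvW : ∀ t ∈ Icc a b, v t ≤ W t := hle
  have hWnn : ∀ t ∈ Icc a b, 0 ≤ W t := fun t ht => (hvnn t ht).trans (hvW t ht)
  have key := norm_le_gronwallBound_of_norm_deriv_right_le (δ := A) (K := C) (ε := 0)
    hWc hW' ?_ ?_
  · intro t ht
    have := key t ht
    rw [gronwallBound_ε0] at this
    calc v t ≤ W t := hvW t ht
      _ ≤ ‖W t‖ := le_abs_self _
      _ ≤ A * Real.exp (C * (t - a)) := this
  · show ‖W a‖ ≤ A
    have : W a = A := by simp [hW]
    rw [this, Real.norm_eq_abs, abs_of_nonneg hA]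
  · intro x hx
    have hx' : x ∈ Icc a b := ⟨hx.1, hx.2.le⟩
    have h1 : ‖g x‖ = C * v x := by
      rw [Real.norm_eq_abs, abs_of_nonneg (mul_nonneg hC (hvnn x hx'))]
    rw [h1, add_zero, Real.norm_eq_abs, abs_of_nonneg (hWnn x hx')]
    exact mul_le_mul_of_nonneg_left (hvW x hx') hC

/-- Gronwall-type estimate with impulses: a nonnegative impulsive-regular
function satisfying a semigroup-type integral inequality on each interval between impulses
and multiplicative jump bounds satisfies the product-exponential estimate. -/
theorem impulsiveGronwall
    (t₀ : ℝ) (τ : ℕ → ℝ) (hτ : IsImpulseSeq t₀ τ)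
    (M : ℝ) (hM : 0 < M) (lam : ℝ) (L : ℝ) (hL : 0 ≤ L)
    (Lj : ℕ → ℝ) (hLj : ∀ j : ℕ, 1 ≤ j → 0 < Lj j)
    (u : ℝ → ℝ) (hunn : ∀ t, t₀ ≤ t → 0 ≤ u t)
    (hreg : ImpulsiveRegular t₀ τ u)
    (hflow : ∀ i : ℕ, ∀ t, τ i ≤ t → t < τ (i + 1) →
      u t ≤ M * Real.exp (lam * (t - τ i)) * u (τ i) +
        ∫ s in (τ i)..t, M * Real.exp (lam * (t - s)) * L * u s)
    (hjump : ∀ i : ℕ, u (τ (i + 1)) ≤ Lj (i + 1) * Function.leftLim u (τ (i + 1))) :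
    ∀ n : ℕ, ∀ t, τ n ≤ t → t < τ (n + 1) →
      u t ≤ M * (∏ j ∈ Finset.Icc 1 n, Lj j * M) * u t₀ *
        Real.exp ((M * L + lam) * (t - t₀)) := by
  obtain ⟨hτ0, hτmono, -⟩ := hτ
  have hτ0le : ∀ i : ℕ, t₀ ≤ τ i := fun i => hτ0 ▸ hτmono.monotone (Nat.zero_le i)
  -- key interval estimate
  have key : ∀ i : ℕ, ∀ t, τ i ≤ t → t < τ (i + 1) →
      u t ≤ M * u (τ i) * Real.exp ((M * L + lam) * (t - τ i)) := by
    intro i t h1 h2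
    set a := τ i with ha
    -- continuity of u on [a, t]
    have hucont : ContinuousOn u (Icc a t) := by
      intro s hs
      rcases eq_or_lt_of_le hs.1 with heq | hlt
      · rw [← heq]
        exact (hreg.1 a (hτ0le i)).mono Icc_subset_Ici_self
      · have hsni : s ∉ impulseSet τ := by
          rintro ⟨j, hj1, hj2⟩
          rcases le_or_gt j i with hji | hji
          · have hh : τ j ≤ τ i := hτmono.monotone hji
            rw [hj2] at hh
            exact absurd hlt (not_lt.2 hh)
          · have hh : τ (i+1) ≤ τ j := hτmono.monotone hji
            rw [hj2] at hh
            exact absurd (lt_of_le_of_lt hs.2 h2) (not_lt.2 hh)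
        exact (hreg.2.1 s ((hτ0le i).trans hs.1) hsni).mono
          (Icc_subset_Ici_self.trans (Ici_subset_Ici.2 (hτ0le i)))
    -- v = e^{-lam s} u s
    set v : ℝ → ℝ := fun s => Real.exp (-lam * s) * u s with hv
    have hvcont : ContinuousOn v (Icc a t) :=
      ((Real.continuous_exp.comp (continuous_const.mul continuous_id)).continuousOn).mul hucont
    have hvnn : ∀ s ∈ Icc a t, 0 ≤ v s := fun s hs =>
      mul_nonneg (Real.exp_nonneg _) (hunn s ((hτ0le i).trans hs.1))
    have hA : 0 ≤ M * Real.exp (-lam * a) * u a :=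
      mul_nonneg (mul_nonneg hM.le (Real.exp_nonneg _)) (hunn a (hτ0le i))
    have hle : ∀ t' ∈ Icc a t, v t' ≤ M * Real.exp (-lam * a) * u a +
        ∫ s in a..t', (M * L) * v s := by
      intro t' ht'
      have hf := hflow i t' ht'.1 (lt_of_le_of_lt ht'.2 h2)
      have hexp : 0 < Real.exp (-lam * t') := Real.exp_pos _
      have step : Real.exp (-lam * t') * u t' ≤
          Real.exp (-lam * t') * (M * Real.exp (lam * (t' - a)) * u a +
            ∫ s in a..t', M * Real.exp (lam * (t' - s)) * L * u s) :=
        mul_le_mul_of_nonneg_left hf hexp.le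
      calc v t' = Real.exp (-lam * t') * u t' := rfl
        _ ≤ _ := step
        _ = M * Real.exp (-lam * a) * u a + ∫ s in a..t', (M * L) * v s := by
            rw [mul_add, ← intervalIntegral.integral_const_mul]
            congr 1
            · rw [← mul_assoc, ← mul_assoc, mul_comm (Real.exp (-lam * t')) M,
                mul_assoc M, ← Real.exp_add]
              ring_nf
            · apply intervalIntegral.integral_congr
              intro s _
              show Real.exp (-lam * t') * (M * Real.exp (lam * (t' - s)) * L * u s)
                  = (M * L) * (Real.exp (-lam * s) * u s)
              rw [show Real.exp (-lam * t') * (M * Real.exp (lam * (t' - s)) * L * u s)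
                  = M * L * ((Real.exp (-lam * t') * Real.exp (lam * (t' - s))) * u s) by ring,
                ← Real.exp_add]
              ring_nf
    have := integral_gronwall (le_trans h1 le_rfl) hvcont hvnn
      (mul_nonneg hM.le hL) hA hle t ⟨h1, le_rfl⟩
    -- v t ≤ M e^{-lam a} u a e^{ML (t-a)}
    have h2' : u t = Real.exp (lam * t) * v t := by
      rw [hv]; simp only; rw [← mul_assoc, ← Real.exp_add]; ring_nf; simp
    rw [h2']
    calc Real.exp (lam * t) * v t
        ≤ Real.exp (lam * t) * (M * Real.exp (-lam * a) * u a *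
            Real.exp (M * L * (t - a))) :=
          mul_le_mul_of_nonneg_left this (Real.exp_nonneg _)
      _ = M * u a * Real.exp ((M * L + lam) * (t - a)) := by
          rw [show Real.exp (lam * t) * (M * Real.exp (-lam * a) * u a *
              Real.exp (M * L * (t - a))) = M * u a *
              (Real.exp (lam * t) * Real.exp (-lam * a) * Real.exp (M * L * (t - a))) by ring,
            ← Real.exp_add, ← Real.exp_add]
          ring_nf
  -- left limit bound
  have hll : ∀ i : ℕ, Function.leftLim u (τ (i + 1)) ≤
      M * u (τ i) * Real.exp ((M * L + lam) * (τ (i + 1) - τ i)) := by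
    intro i
    obtain ⟨c, hc⟩ := hreg.2.2 (i + 1) (Nat.le_add_left 1 i)
    have hne : (𝓝[<] (τ (i + 1))).NeBot := ⟨by
      simp [nhdsLT_neBot (τ (i+1)) |>.ne]⟩
    rw [leftLim_eq_of_tendsto (h := hne) hc]
    have hg : Tendsto (fun s => M * u (τ i) * Real.exp ((M * L + lam) * (s - τ i)))
        (𝓝[<] (τ (i + 1))) (𝓝 (M * u (τ i) * Real.exp ((M * L + lam) * (τ (i+1) - τ i)))) := by
      apply Tendsto.mono_left _ nhdsWithin_le_nhds
      exact (Continuous.tendsto (by continuity) _)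
    refine le_of_tendsto_of_tendsto hc hg ?_
    filter_upwards [Ioo_mem_nhdsLT_of_mem ⟨hτmono (Nat.lt_succ_self i), le_rfl⟩] with s hs
    exact key i s hs.1.le hs.2
  -- bound at impulse times
  have hbase : ∀ n : ℕ, u (τ n) ≤ (∏ j ∈ Finset.Icc 1 n, Lj j * M) * u t₀ *
      Real.exp ((M * L + lam) * (τ n - t₀)) := by
    intro n
    induction n with
    | zero => simp [hτ0]
    | succ n ih =>
      have h1 := hjump n
      have h2 := hll n
      have hLjn : 0 < Lj (n + 1) := hLj (n+1) (Nat.le_add_left 1 n)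
      calc u (τ (n + 1)) ≤ Lj (n + 1) * Function.leftLim u (τ (n + 1)) := h1
        _ ≤ Lj (n + 1) * (M * u (τ n) * Real.exp ((M * L + lam) * (τ (n+1) - τ n))) :=
            mul_le_mul_of_nonneg_left h2 hLjn.le
        _ ≤ Lj (n + 1) * (M * ((∏ j ∈ Finset.Icc 1 n, Lj j * M) * u t₀ *
              Real.exp ((M * L + lam) * (τ n - t₀))) *
              Real.exp ((M * L + lam) * (τ (n+1) - τ n))) := by
            apply mul_le_mul_of_nonneg_left _ hLjn.le
            apply mul_le_mul_of_nonneg_right _ (Real.exp_nonneg _)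
            exact mul_le_mul_of_nonneg_left ih hM.le
        _ = (∏ j ∈ Finset.Icc 1 (n+1), Lj j * M) * u t₀ *
              Real.exp ((M * L + lam) * (τ (n+1) - t₀)) := by
            rw [Finset.prod_Icc_succ_top (Nat.le_add_left 1 n),
              show Lj (n + 1) * (M * ((∏ j ∈ Finset.Icc 1 n, Lj j * M) * u t₀ *
                Real.exp ((M * L + lam) * (τ n - t₀))) *
                Real.exp ((M * L + lam) * (τ (n+1) - τ n)))
                = (∏ j ∈ Finset.Icc 1 n, Lj j * M) * (Lj (n + 1) * M) * u t₀ *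
                (Real.exp ((M * L + lam) * (τ n - t₀)) *
                  Real.exp ((M * L + lam) * (τ (n+1) - τ n))) by ring,
              ← Real.exp_add,
              show (M * L + lam) * (τ n - t₀) + (M * L + lam) * (τ (n+1) - τ n)
                = (M * L + lam) * (τ (n+1) - t₀) by ring]
  intro n t h1 h2
  calc u t ≤ M * u (τ n) * Real.exp ((M * L + lam) * (t - τ n)) := key n t h1 h2
    _ ≤ M * ((∏ j ∈ Finset.Icc 1 n, Lj j * M) * u t₀ *
          Real.exp ((M * L + lam) * (τ n - t₀))) * Real.exp ((M * L + lam) * (t - τ n)) := by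
        apply mul_le_mul_of_nonneg_right _ (Real.exp_nonneg _)
        exact mul_le_mul_of_nonneg_left (hbase n) hM.le
    _ = M * (∏ j ∈ Finset.Icc 1 n, Lj j * M) * u t₀ *
          Real.exp ((M * L + lam) * (t - t₀)) := by
        rw [show M * ((∏ j ∈ Finset.Icc 1 n, Lj j * M) * u t₀ *
            Real.exp ((M * L + lam) * (τ n - t₀))) * Real.exp ((M * L + lam) * (t - τ n))
            = M * (∏ j ∈ Finset.Icc 1 n, Lj j * M) * u t₀ *
            (Real.exp ((M * L + lam) * (τ n - t₀)) * Real.exp ((M * L + lam) * (t - τ n))) by ring,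
          ← Real.exp_add,
          show (M * L + lam) * (τ n - t₀) + (M * L + lam) * (t - τ n)
            = (M * L + lam) * (t - t₀) by ring]
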